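/- For every α ∈ (0,1) the following hold: (i) cosh²(u) − 2α·sinh(u) = 0 if and only if sinh(u) = α + i·√(1−α²) or sinh(u) = α − i·√(1−α²); (ii) the equation sinh(u) = α + i·√(1−α²) has exactly two solutions ρ₋, ρ₊ in the strip {u ∈ ℂ : 0 < Im u < π}, and they satisfy 0 < Im ρ₋ < π/2 < Im ρ₊ < π; (iii) every zero of cosh²(u) − 2α·sinh(u) in the strip {0 < Im u < π} equals ρ₋ or ρ₊, and each of ρ₋, ρ₊ is a pole of order exactly 2 of the meromorphic function β(u) = sinh(u)·cosh(u)/(cosh²(u) − 2α·sinh(u))². -/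

import Mathlib

noncomputable section

open Filter Set Topology

set_option maxHeartbeats 1000000

/-- The meromorphic function `β(u) = sinh u · cosh u / (cosh² u − 2α sinh u)²`. -/
def betaC (α : ℝ) (u : ℂ) : ℂ :=
  Complex.sinh u * Complex.cosh u / (Complex.cosh u ^ 2 - 2 * (α : ℂ) * Complex.sinh u) ^ 2

lemma sinh_decomp (u : ℂ) :
    Complex.sinh u = (Real.sinh u.re * Real.cos u.im : ℝ) +
      (Real.cosh u.re * Real.sin u.im : ℝ) * Complex.I := by
  conv_lhs => rw [← Complex.re_add_im u]
  rw [Complex.sinh_add, Complex.cosh_mul_I, Complex.sinh_mul_I, ← Complex.ofReal_sinh,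
    ← Complex.ofReal_cosh, ← Complex.ofReal_cos, ← Complex.ofReal_sin]
  push_cast
  ring

/-- for every `α ∈ (0,1)`:
(i) `cosh²u − 2α·sinh u = 0` iff `sinh u = α ± i√(1−α²)`;
(ii) the equation `sinh u = α + i√(1−α²)` has exactly two solutions `ρ₋, ρ₊` in the strip
`0 < Im u < π`, with `0 < Im ρ₋ < π/2 < Im ρ₊ < π`;
(iii) every zero of `cosh²u − 2α·sinh u` in the strip equals `ρ₋` or `ρ₊`, and each of
`ρ₋, ρ₊` is a pole of order exactly `2` of `β`. -/
theorem stmt0 (α : ℝ) (hα0 : 0 < α) (hα1 : α < 1) :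
    (∀ u : ℂ, Complex.cosh u ^ 2 - 2 * (α : ℂ) * Complex.sinh u = 0 ↔
      (Complex.sinh u = (α : ℂ) + Complex.I * (Real.sqrt (1 - α ^ 2) : ℂ) ∨
        Complex.sinh u = (α : ℂ) - Complex.I * (Real.sqrt (1 - α ^ 2) : ℂ))) ∧
    (∃ ρm ρp : ℂ,
      Complex.sinh ρm = (α : ℂ) + Complex.I * (Real.sqrt (1 - α ^ 2) : ℂ) ∧
      Complex.sinh ρp = (α : ℂ) + Complex.I * (Real.sqrt (1 - α ^ 2) : ℂ) ∧
      0 < ρm.im ∧ ρm.im < Real.pi / 2 ∧ Real.pi / 2 < ρp.im ∧ ρp.im < Real.pi ∧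
      (∀ u : ℂ, 0 < u.im → u.im < Real.pi →
        Complex.sinh u = (α : ℂ) + Complex.I * (Real.sqrt (1 - α ^ 2) : ℂ) →
        u = ρm ∨ u = ρp) ∧
      (∀ u : ℂ, 0 < u.im → u.im < Real.pi →
        Complex.cosh u ^ 2 - 2 * (α : ℂ) * Complex.sinh u = 0 → u = ρm ∨ u = ρp) ∧
      (∀ ρ : ℂ, ρ = ρm ∨ ρ = ρp →
        ∃ g : ℂ → ℂ, AnalyticAt ℂ g ρ ∧ g ρ ≠ 0 ∧
          ∀ᶠ u in nhdsWithin ρ {ρ}ᶜ, betaC α u = g u / (u - ρ) ^ 2)) := by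
  have hπ := Real.pi_pos
  set b : ℝ := Real.sqrt (1 - α ^ 2) with hb
  have h1α2 : (0:ℝ) < 1 - α ^ 2 := by nlinarith
  have hb2 : b ^ 2 = 1 - α ^ 2 := Real.sq_sqrt h1α2.le
  have hb0 : 0 < b := Real.sqrt_pos.mpr h1α2
  have hb2c : (b : ℂ) ^ 2 = 1 - (α : ℂ) ^ 2 := by
    rw [← Complex.ofReal_pow, hb2]; push_cast; ring
  set s : ℂ := (α : ℂ) + Complex.I * (b : ℂ) with hs
  -- part (i)
  have hiff : ∀ u : ℂ, Complex.cosh u ^ 2 - 2 * (α : ℂ) * Complex.sinh u = 0 ↔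
      (Complex.sinh u = s ∨ Complex.sinh u = (α : ℂ) - Complex.I * (b : ℂ)) := by
    intro u
    have hfac : Complex.cosh u ^ 2 - 2 * (α : ℂ) * Complex.sinh u =
        (Complex.sinh u - s) * (Complex.sinh u - ((α : ℂ) - Complex.I * (b : ℂ))) := by
      rw [Complex.cosh_sq, hs]
      linear_combination (-1 : ℂ) * hb2c + (b : ℂ) ^ 2 * Complex.I_sq
    rw [hfac, mul_eq_zero, sub_eq_zero, sub_eq_zero]
  -- the special points
  set a : ℝ := Real.sqrt α with ha
  have ha2 : a ^ 2 = α := Real.sq_sqrt hα0.le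
  have ha0 : 0 < a := Real.sqrt_pos.mpr hα0
  have ha1 : a < 1 := by
    rw [ha, ← Real.sqrt_one]; exact Real.sqrt_lt_sqrt hα0.le hα1
  set x : ℝ := Real.arsinh a with hx
  set y : ℝ := Real.arccos a with hy
  have hy0 : 0 < y := Real.arccos_pos.mpr ha1
  have hy2 : y < Real.pi / 2 := Real.arccos_lt_pi_div_two.mpr ha0
  set ρm : ℂ := (x : ℂ) + (y : ℂ) * Complex.I with hρm
  set ρp : ℂ := (Real.pi : ℂ) * Complex.I - ρm with hρp
  have hρm_re : ρm.re = x := by simp [hρm]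
  have hρm_im : ρm.im = y := by simp [hρm]
  have hρp_im : ρp.im = Real.pi - y := by simp [hρp, hρm]
  have hsm : Complex.sinh ρm = s := by
    rw [sinh_decomp, hρm_re, hρm_im, hx, hy, Real.sinh_arsinh, Real.cosh_arsinh,
      Real.cos_arccos (by linarith) ha1.le, Real.sin_arccos, ha2, hs]
    have h1 : a * a = α := by nlinarith
    have h2 : Real.sqrt (1 + α) * Real.sqrt (1 - α) = b := by
      rw [← Real.sqrt_mul (by linarith), hb]
      congr 1; ring
    rw [h1, h2]; ring
  have hsp : Complex.sinh ρp = s := by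
    rw [hρp, Complex.sinh_sub, Complex.sinh_mul_I, Complex.cosh_mul_I,
      ← Complex.ofReal_sin, ← Complex.ofReal_cos, Real.sin_pi, Real.cos_pi, hsm]
    push_cast; ring
  -- uniqueness of solutions of sinh u = s in the strip
  have huniq : ∀ u : ℂ, 0 < u.im → u.im < Real.pi → Complex.sinh u = s →
      u = ρm ∨ u = ρp := by
    intro u him0 himπ hsu
    have h0 : Complex.sin (u * Complex.I) - Complex.sin (ρm * Complex.I) = 0 := by
      rw [Complex.sin_mul_I, Complex.sin_mul_I, hsu, hsm]; ring
    rw [Complex.sin_sub_sin] at h0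
    rcases mul_eq_zero.mp h0 with h | hcos
    · rcases mul_eq_zero.mp h with h2 | hsin
      · norm_num at h2
      · rw [Complex.sin_eq_zero_iff] at hsin
        obtain ⟨k, hk⟩ := hsin
        have hu : u = ρm - 2 * (k : ℂ) * (Real.pi : ℂ) * Complex.I := by
          linear_combination (-2 * Complex.I) * hk + (u - ρm) * Complex.I_sq
        have him : u.im = y - 2 * (k : ℝ) * Real.pi := by
          rw [hu]; simp [hρm]
        have hk1 : (k : ℝ) < 1 := by nlinarith [him0, himπ, hy0, hy2]
        have hk2 : (-1 : ℝ) < (k : ℝ) := by nlinarith [him0, himπ, hy0, hy2]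
        have hk0 : k = 0 := by
          have l1 : k < 1 := by exact_mod_cast hk1
          have l2 : (-1 : ℤ) < k := by exact_mod_cast hk2
          omega
        left
        rw [hu, hk0]; push_cast; ring
    · rw [Complex.cos_eq_zero_iff] at hcos
      obtain ⟨k, hk⟩ := hcos
      have hu : u = -(2 * (k : ℂ) + 1) * (Real.pi : ℂ) * Complex.I - ρm := by
        linear_combination (-2 * Complex.I) * hk + (u + ρm) * Complex.I_sq
      have him : u.im = -(2 * (k : ℝ) + 1) * Real.pi - y := by
        rw [hu]; simp [hρm]
      have hk1 : 2 * (k : ℝ) + 1 < 0 := by nlinarith [him0, himπ, hy0, hy2]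
      have hk2 : (-2 : ℝ) < 2 * (k : ℝ) + 1 := by nlinarith [him0, himπ, hy0, hy2]
      have hk0 : k = -1 := by
        have l1 : 2 * k + 1 < 0 := by exact_mod_cast hk1
        have l2 : (-2 : ℤ) < 2 * k + 1 := by exact_mod_cast hk2
        omega
      right
      rw [hu, hk0, hρp]; push_cast; ring
  -- zeros in the strip
  have hzero : ∀ u : ℂ, 0 < u.im → u.im < Real.pi →
      Complex.cosh u ^ 2 - 2 * (α : ℂ) * Complex.sinh u = 0 → u = ρm ∨ u = ρp := by
    intro u him0 himπ hD
    rcases (hiff u).mp hD with h | h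
    · exact huniq u him0 himπ h
    · exfalso
      have h1 : (Complex.sinh u).im = -b := by rw [h]; simp
      rw [sinh_decomp] at h1
      simp only [Complex.add_im, Complex.ofReal_im, Complex.mul_im, Complex.ofReal_re,
        Complex.I_im, Complex.I_re, mul_zero, mul_one, zero_add, add_zero] at h1
      have h2 : 0 < Real.cosh u.re * Real.sin u.im :=
        mul_pos (Real.cosh_pos _) (Real.sin_pos_of_pos_of_lt_pi him0 himπ)
      nlinarith
  -- the pole structure
  have hpole : ∀ ρ : ℂ, ρ = ρm ∨ ρ = ρp →
      ∃ g : ℂ → ℂ, AnalyticAt ℂ g ρ ∧ g ρ ≠ 0 ∧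
        ∀ᶠ u in nhdsWithin ρ {ρ}ᶜ, betaC α u = g u / (u - ρ) ^ 2 := by
    intro ρ hρ
    have hsρ : Complex.sinh ρ = s := by rcases hρ with rfl | rfl; exacts [hsm, hsp]
    set D : ℂ → ℂ := fun u => Complex.cosh u ^ 2 - 2 * (α : ℂ) * Complex.sinh u with hD
    have hDdiff : Differentiable ℂ D :=
      (Complex.differentiable_cosh.pow 2).sub
        ((differentiable_const _).mul Complex.differentiable_sinh)
    have hDρ : D ρ = 0 := (hiff ρ).mpr (Or.inl hsρ)
    have hs0 : s ≠ 0 := by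
      intro h
      have := congrArg Complex.re h
      simp [hs] at this
      exact hα0.ne' this
    have hcosh : Complex.cosh ρ ≠ 0 := by
      have h2 : Complex.cosh ρ ^ 2 = 2 * (α : ℂ) * s := by
        rw [Complex.cosh_sq, hsρ, hs]
        linear_combination (-1 : ℂ) * hb2c + (b : ℂ) ^ 2 * Complex.I_sq
      intro h
      rw [h] at h2
      have hne : 2 * (α : ℂ) * s ≠ 0 :=
        mul_ne_zero (mul_ne_zero two_ne_zero (by exact_mod_cast hα0.ne')) hs0
      exact hne (by rw [← h2]; ring)
    have hderiv : HasDerivAt D (2 * Complex.cosh ρ * Complex.sinh ρ -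
        2 * (α : ℂ) * Complex.cosh ρ) ρ := by
      have hc := (Complex.hasDerivAt_cosh ρ).fun_pow 2
      have hsd := (Complex.hasDerivAt_sinh ρ).const_mul (2 * (α : ℂ))
      have := hc.fun_sub hsd
      simpa using this
    have hd_ne : 2 * Complex.cosh ρ * Complex.sinh ρ - 2 * (α : ℂ) * Complex.cosh ρ ≠ 0 := by
      have heq : 2 * Complex.cosh ρ * Complex.sinh ρ - 2 * (α : ℂ) * Complex.cosh ρ =
          2 * Complex.cosh ρ * (Complex.I * (b : ℂ)) := by
        rw [hsρ, hs]; ring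
      rw [heq]
      refine mul_ne_zero (mul_ne_zero two_ne_zero hcosh) (mul_ne_zero Complex.I_ne_zero ?_)
      exact_mod_cast hb0.ne'
    set h : ℂ → ℂ := dslope D ρ with hh
    have hhana : AnalyticAt ℂ h ρ := by
      obtain ⟨p, hp⟩ := hDdiff.differentiableOn.analyticAt (univ_mem : univ ∈ 𝓝 ρ)
      exact ⟨p.fslope, hp.has_fpower_series_dslope_fslope⟩
    have hhρ : h ρ ≠ 0 := by
      rw [hh, dslope_same, hderiv.deriv]; exact hd_ne
    refine ⟨fun u => Complex.sinh u * Complex.cosh u / (h u) ^ 2, ?_, ?_, ?_⟩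
    · exact ((Complex.differentiable_sinh.differentiableOn.analyticAt
        (univ_mem : univ ∈ 𝓝 ρ)).mul (Complex.differentiable_cosh.differentiableOn.analyticAt
        (univ_mem : univ ∈ 𝓝 ρ))).div (hhana.pow 2) (pow_ne_zero 2 hhρ)
    · refine div_ne_zero (mul_ne_zero ?_ hcosh) (pow_ne_zero 2 hhρ)
      rw [hsρ]; exact hs0
    · filter_upwards [self_mem_nhdsWithin] with u hu
      have hune : u ≠ ρ := hu
      have hDu : D u = (u - ρ) * h u := by
        rw [hh, dslope_of_ne _ hune, slope_def_field, hDρ, sub_zero,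
          mul_div_cancel₀ _ (sub_ne_zero.mpr hune)]
      have : betaC α u = Complex.sinh u * Complex.cosh u / (D u) ^ 2 := rfl
      rw [this, hDu, mul_pow, div_div, mul_comm ((u - ρ) ^ 2), ← div_div]
  exact ⟨hiff, ρm, ρp, hsm, hsp, by rw [hρm_im]; exact hy0, by rw [hρm_im]; exact hy2,
    by rw [hρp_im]; linarith, by rw [hρp_im]; linarith, huniq, hzero, hpole⟩
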